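/- For every A ∈ ℂ^{n×n} there exists exactly one matrix D ∈ ℂ^{n×n} whose nonzero entries are confined to the first-column positions (n,1), (n−2,1), (n−4,1), … (i.e., positions (n−2t, 1) for integers t with 0 ≤ t < ⌈n/2⌉) such that A − D ∈ T(J_n(0)); that is, ℂ^{n×n} = T(J_n(0)) ⊕_ℝ V, where V is the complex subspace of matrices supported on these ⌈n/2⌉ positions. -/

import Mathlib

open Matrix

/-- The `n×n` upper-triangular Jordan block with eigenvalue `l`. -/
noncomputable def Jmat (n : ℕ) (l : ℂ) : Matrix (Fin n) (Fin n) ℂ :=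
  Matrix.of fun i j =>
    if (i : ℕ) = (j : ℕ) then l
    else if (j : ℕ) = (i : ℕ) + 1 then 1 else 0

/-- The symmetric matrix `Δ_n`: (1-based) entry `(j,k)` is `1` if `j+k = n+1`,
`i` if `j+k = n+2`, and `0` otherwise. -/
noncomputable def Dmat (n : ℕ) : Matrix (Fin n) (Fin n) ℂ :=
  Matrix.of fun i j =>
    if (i : ℕ) + (j : ℕ) + 1 = n then 1
    else if (i : ℕ) + (j : ℕ) = n then Complex.I
    else 0

/-- The `2m×2m` block matrix `H_m(l) = [[0, I],[J_m(l), 0]]`. -/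
noncomputable def Hmat (m : ℕ) (l : ℂ) : Matrix (Fin m ⊕ Fin m) (Fin m ⊕ Fin m) ℂ :=
  Matrix.fromBlocks 0 1 (Jmat m l) 0

/-- `T(A) = {CᴴA + AC}`, the tangent space to the *congruence class of `A`. -/
def Tset {n : Type*} [Fintype n] (A : Matrix n n ℂ) : Set (Matrix n n ℂ) :=
  {X | ∃ C : Matrix n n ℂ, X = Cᴴ * A + A * C}

/-- `T(M,N) = {(SᴴM + NR, RᴴN + MS)}`. -/
def Tpair {p q : Type*} [Fintype p] [Fintype q]
    (M : Matrix p p ℂ) (N : Matrix q q ℂ) :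
    Set (Matrix q p ℂ × Matrix p q ℂ) :=
  {X | ∃ (S : Matrix p q ℂ) (R : Matrix q p ℂ),
      X = (Sᴴ * M + N * R, Rᴴ * N + M * S)}



namespace Stmt10
variable {n : ℕ}

/-- extension of a matrix to ℕ-indexed entries, zero out of range -/
def ee (n : ℕ) (M : Matrix (Fin n) (Fin n) ℂ) (a b : ℕ) : ℂ :=
  if h : a < n ∧ b < n then M ⟨a, h.1⟩ ⟨b, h.2⟩ else 0

lemma ee_out {M : Matrix (Fin n) (Fin n) ℂ} {a b : ℕ} (h : n ≤ a ∨ n ≤ b) :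
    ee n M a b = 0 := by
  rw [ee, dif_neg]; omega

lemma ee_in {M : Matrix (Fin n) (Fin n) ℂ} {a b : ℕ} (ha : a < n) (hb : b < n) :
    ee n M a b = M ⟨a, ha⟩ ⟨b, hb⟩ := by
  rw [ee, dif_pos ⟨ha, hb⟩]

lemma ee_zero (a b : ℕ) : ee n 0 a b = 0 := by
  rw [ee]; split <;> simp

lemma Jmat_apply (i j : Fin n) :
    Jmat n 0 i j = if (j : ℕ) = (i : ℕ) + 1 then 1 else 0 := by
  simp only [Jmat, Matrix.of_apply]
  split
  · rw [if_neg (by omega)]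
  · rfl

lemma mulJ (C : Matrix (Fin n) (Fin n) ℂ) (i j : Fin n) :
    (Cᴴ * Jmat n 0) i j =
      if h : 1 ≤ (j : ℕ) then (starRingEnd ℂ) (C ⟨(j : ℕ) - 1, by omega⟩ i) else 0 := by
  rw [Matrix.mul_apply]
  split
  · rename_i h
    rw [Finset.sum_eq_single (⟨(j : ℕ) - 1, by omega⟩ : Fin n)]
    · rw [conjTranspose_apply, Jmat_apply, if_pos (by simp; omega)]
      simp
    · intro k _ hk
      rw [Jmat_apply, if_neg, mul_zero]
      intro hc
      exact hk (Fin.ext (by simp only [Fin.val_mk]; omega))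
    · intro h; simp at h
  · rename_i h
    apply Finset.sum_eq_zero
    intro k _
    rw [Jmat_apply, if_neg (by omega), mul_zero]

lemma Jmul (C : Matrix (Fin n) (Fin n) ℂ) (i j : Fin n) :
    (Jmat n 0 * C) i j =
      if h : (i : ℕ) + 1 < n then C ⟨(i : ℕ) + 1, h⟩ j else 0 := by
  rw [Matrix.mul_apply]
  split
  · rename_i h
    rw [Finset.sum_eq_single (⟨(i : ℕ) + 1, h⟩ : Fin n)]
    · rw [Jmat_apply, if_pos (by simp), one_mul]
    · intro k _ hk
      rw [Jmat_apply, if_neg, zero_mul]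
      intro hc
      exact hk (Fin.ext (by simp only [Fin.val_mk]; omega))
    · intro h; simp at h
  · rename_i h
    apply Finset.sum_eq_zero
    intro k _
    rw [Jmat_apply, if_neg (by omega), zero_mul]

/-- the key entrywise relations -/
lemma relJ {C D : Matrix (Fin n) (Fin n) ℂ} (h : Cᴴ * Jmat n 0 + Jmat n 0 * C = D) :
    (∀ i j : ℕ, 1 ≤ j → j < n →
      ee n C (i + 1) j = ee n D i j - (starRingEnd ℂ) (ee n C (j - 1) i)) ∧
    (∀ i : ℕ, ee n C (i + 1) 0 = ee n D i 0) := by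
  constructor
  · intro i j hj1 hjn
    by_cases hi : i < n
    · have := congrFun (congrFun h ⟨i, hi⟩) ⟨j, hjn⟩
      rw [Matrix.add_apply, mulJ, Jmul, dif_pos (show 1 ≤ ((⟨j, hjn⟩ : Fin n) : ℕ) from hj1)] at this
      simp only [Fin.val_mk] at this
      split at this
      · rename_i hin
        rw [ee_in (show i + 1 < n from hin) hjn, ee_in hi hjn,
          ee_in (show j - 1 < n by omega) hi, ← this]
        ring
      · rw [ee_out (Or.inl (show n ≤ i + 1 by omega)), ee_in hi hjn,
          ee_in (show j - 1 < n by omega) hi, ← this]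
        ring
    · rw [ee_out (Or.inl (by omega)), ee_out (Or.inl (by omega)),
        ee_out (Or.inr (by omega))]
      simp
  · intro i
    by_cases hi : i < n
    · have hn : (0:ℕ) < n := by omega
      have := congrFun (congrFun h ⟨i, hi⟩) ⟨0, hn⟩
      rw [Matrix.add_apply, mulJ, Jmul, dif_neg (by simp)] at this
      simp only [Fin.val_mk] at this
      split at this
      · rename_i hin
        rw [ee_in (show i + 1 < n from hin) hn, ee_in hi hn, ← this]; ring
      · rw [ee_out (Or.inl (show n ≤ i + 1 by omega)), ee_in hi hn, ← this]; ring
    · rw [ee_out (Or.inl (by omega)), ee_out (Or.inl (by omega))]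

def w : ℕ × ℕ → ℕ × ℕ := fun s => (s.2 + 1, s.1 + 1)

lemma w_iter (k p q : ℕ) :
    w^[k] (p, q) = if Even k then (p + k, q + k) else (q + k, p + k) := by
  induction k generalizing p q with
  | zero => simp
  | succ k ih =>
    rw [Function.iterate_succ_apply, show w (p, q) = (q + 1, p + 1) from rfl, ih]
    rcases Nat.even_or_odd k with hk | hk
    · rw [if_pos hk, if_neg (by simp [Nat.even_add_one, hk])]
      simp [Prod.ext_iff]; omega
    · rw [if_neg (Nat.not_even_iff_odd.mpr hk), if_pos (Nat.even_add_one.mpr (Nat.not_even_iff_odd.mpr hk))]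
      simp [Prod.ext_iff]; omega

/-- zero-propagation along chains -/
lemma chain (c : ℕ → ℕ → ℂ)
    (hrel : ∀ i j : ℕ, 1 ≤ j → j + 1 ≤ n →
      c (i + 1) j = -(starRingEnd ℂ) (c (j - 1) i)) :
    ∀ (K : ℕ) (p q : ℕ), (∀ l, l < K → (w^[l] (p, q)).1 + 2 ≤ n) →
      c (w^[K] (p, q)).1 (w^[K] (p, q)).2 = 0 → c p q = 0 := by
  intro K
  induction K with
  | zero => intro p q _ h; simpa using h
  | succ K ih =>
    intro p q hcond hend
    have h0 : p + 2 ≤ n := by simpa using hcond 0 (by omega)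
    have h1 : c (q + 1) (p + 1) = 0 := by
      have := ih (q + 1) (p + 1)
        (fun l hl => by
          rw [show ((q+1 : ℕ), (p+1 : ℕ)) = w (p, q) from rfl, ← Function.iterate_succ_apply]
          exact hcond (l + 1) (by omega))
        (by
          rw [show ((q+1 : ℕ), (p+1 : ℕ)) = w (p, q) from rfl, ← Function.iterate_succ_apply]
          exact hend)
      exact this
    rw [hrel q (p + 1) (by omega) (by omega)] at h1
    simp only [Nat.add_sub_cancel] at h1
    have := neg_eq_zero.mp h1
    simpa using this

/-- disjointness core: if `CᴴJ+JC = D` and `D` is supported on the special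
positions, then `D = 0`. -/
lemma memV_eq_zero {C D : Matrix (Fin n) (Fin n) ℂ}
    (hCD : Cᴴ * Jmat n 0 + Jmat n 0 * C = D)
    (hD : ∀ p q : Fin n, D p q ≠ 0 → ((q : ℕ) = 0 ∧ ∃ t : ℕ, (p : ℕ) + 2 * t + 1 = n)) :
    D = 0 := by
  obtain ⟨hrel', hcol⟩ := relJ hCD
  have hDz : ∀ i j : ℕ, 1 ≤ j → ee n D i j = 0 := by
    intro i j hj
    by_cases h : i < n ∧ j < n
    · rw [ee_in h.1 h.2]
      by_contra hne
      have := (hD _ _ hne).1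
      simp only [Fin.val_mk] at this
      omega
    · exact ee_out (by omega)
  have hrel : ∀ i j : ℕ, 1 ≤ j → j + 1 ≤ n →
      ee n C (i + 1) j = -(starRingEnd ℂ) (ee n C (j - 1) i) := by
    intro i j hj hjn
    rw [hrel' i j hj (by omega), hDz i j hj]
    ring
  ext p q
  rw [Matrix.zero_apply]
  by_cases hpq : ((q : ℕ) = 0 ∧ ∃ t : ℕ, (p : ℕ) + 2 * t + 1 = n)
  · obtain ⟨hq, t, ht⟩ := hpq
    have hDpq : D p q = ee n D (p : ℕ) 0 := by
      rw [ee_in p.2 (by omega), Fin.eta]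
      congr 1
      exact Fin.ext hq
    rw [hDpq, ← hcol (p : ℕ)]
    rcases t with _ | t'
    · exact ee_out (Or.inl (by omega))
    · apply chain (ee n C) hrel (2 * t' + 1) ((p : ℕ) + 1) 0
      · intro l hl
        rw [w_iter]
        rcases Nat.even_or_odd l with hle | hlo
        · rw [if_pos hle]; simp; omega
        · rw [if_neg (Nat.not_even_iff_odd.mpr hlo)]
          simp
          omega
      · rw [w_iter, if_neg (by simp [Nat.even_add_one, parity_simps])]
        simp only []
        have h2 := hrel ((p : ℕ) + 1 + (2 * t' + 1)) (2 * t' + 2) (by omega) (by omega)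
        rw [ee_out (Or.inl (by omega))] at h2
        have := (neg_eq_zero.mp h2.symm)
        have := (map_eq_zero (starRingEnd ℂ)).mp this
        simpa using this
  · by_contra hne
    exact hpq (hD p q hne)

/-- kernel core: a kernel element vanishing at the free row-0 positions is zero -/
lemma ker_zero {C : Matrix (Fin n) (Fin n) ℂ}
    (hC : Cᴴ * Jmat n 0 + Jmat n 0 * C = 0)
    (hz : ∀ b : ℕ, b < n → (b = 0 ∨ b % 2 = n % 2) → ee n C 0 b = 0) :
    C = 0 := by
  obtain ⟨hrel', hcol'⟩ := relJ hC
  have hrel : ∀ i j : ℕ, 1 ≤ j → j + 1 ≤ n →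
      ee n C (i + 1) j = -(starRingEnd ℂ) (ee n C (j - 1) i) := by
    intro i j hj hjn
    rw [hrel' i j hj (by omega), ee_zero]
    ring
  have hcol : ∀ i : ℕ, ee n C (i + 1) 0 = 0 := by
    intro i; rw [hcol' i, ee_zero]
  have hrow0 : ∀ b : ℕ, b < n → ee n C 0 b = 0 := by
    intro b hb
    by_cases hbS : b = 0 ∨ b % 2 = n % 2
    · exact hz b hb hbS
    · push_neg at hbS
      obtain ⟨k, hk⟩ : ∃ k : ℕ, b + 2 * k + 1 = n := ⟨(n - b - 1) / 2, by omega⟩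
      apply chain (ee n C) hrel (2 * k) 0 b
      · intro l hl
        rw [w_iter]
        rcases Nat.even_or_odd l with hle | hlo
        · rw [if_pos hle]; simp; omega
        · rw [if_neg (Nat.not_even_iff_odd.mpr hlo)]; simp; omega
      · rw [w_iter, if_pos (by exact ⟨k, by ring⟩)]
        simp only []
        have h2 := hrel (b + 2 * k) (2 * k + 1) (by omega) (by omega)
        rw [ee_out (Or.inl (by omega))] at h2
        have := (neg_eq_zero.mp h2.symm)
        have := (map_eq_zero (starRingEnd ℂ)).mp this
        have h4 : ee n C (2 * k) (b + 2 * k) = 0 := by simpa using this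
        have h5 : (0 : ℕ) + 2 * k = 2 * k := by omega
        rw [h5]
        exact h4
  have hall : ∀ (s a b : ℕ), a + b ≤ s → ee n C a b = 0 := by
    intro s
    induction s with
    | zero =>
      intro a b hab
      have ha : a = 0 := by omega
      have hb : b = 0 := by omega
      subst ha hb
      by_cases h : 0 < n
      · exact hrow0 0 h
      · exact ee_out (Or.inl (by omega))
    | succ s ih =>
      intro a b hab
      match a with
      | 0 =>
        by_cases h : b < n
        · exact hrow0 b h
        · exact ee_out (Or.inr (by omega))
      | (a' + 1) =>
        match b with
        | 0 => exact hcol a'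
        | (b' + 1) =>
          by_cases h : b' + 1 < n
          · rw [hrel a' (b' + 1) (by omega) (by omega)]
            have : ee n C (b' + 1 - 1) a' = 0 := by
              apply ih; omega
            rw [this]
            simp
          · exact ee_out (Or.inr (by omega))
  ext i j
  rw [Matrix.zero_apply]
  have := hall ((i : ℕ) + (j : ℕ)) i j le_rfl
  rwa [ee_in i.2 j.2, Fin.eta, Fin.eta] at this

/-- the congruence-tangent map as an ℝ-linear map -/
noncomputable def Lmap (n : ℕ) :
    Matrix (Fin n) (Fin n) ℂ →ₗ[ℝ] Matrix (Fin n) (Fin n) ℂ where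
  toFun C := Cᴴ * Jmat n 0 + Jmat n 0 * C
  map_add' C₁ C₂ := by
    rw [conjTranspose_add, Matrix.add_mul, Matrix.mul_add]
    abel
  map_smul' r C := by
    rw [conjTranspose_smul, star_trivial, Matrix.smul_mul, Matrix.mul_smul,
      RingHom.id_apply, smul_add]

/-- the complementary subspace, as an ℝ-submodule -/
noncomputable def Vsub (n : ℕ) : Submodule ℝ (Matrix (Fin n) (Fin n) ℂ) where
  carrier := {D | ∀ p q : Fin n,
    ¬((q : ℕ) = 0 ∧ ∃ t : ℕ, (p : ℕ) + 2 * t + 1 = n) → D p q = 0}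
  zero_mem' := by intro p q _; rfl
  add_mem' := by
    intro a b ha hb p q h
    rw [Matrix.add_apply, ha p q h, hb p q h, add_zero]
  smul_mem' := by
    intro r a ha p q h
    rw [Matrix.smul_apply, ha p q h, smul_zero]

def mm (n : ℕ) : ℕ := (n + 1) / 2

/-- reading off the free positions in row 0 -/
noncomputable def Phi (n : ℕ) :
    Matrix (Fin n) (Fin n) ℂ →ₗ[ℝ] (Fin (mm n) → ℂ) where
  toFun C := fun t => ee n C 0 (n - 2 * ((t : ℕ) + 1))
  map_add' C₁ C₂ := by
    funext t
    simp only [ee, Pi.add_apply]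
    split <;> simp
  map_smul' r C := by
    funext t
    simp only [ee, RingHom.id_apply, Pi.smul_apply]
    split <;> simp

lemma Phi_ker : ∀ C ∈ LinearMap.ker (Lmap n), Phi n C = 0 → C = 0 := by
  intro C hC hPhi
  apply ker_zero (LinearMap.mem_ker.mp hC)
  intro b hb hbS
  obtain ⟨tv, htv, htb⟩ : ∃ tv : ℕ, tv < mm n ∧ n - 2 * (tv + 1) = b := by
    rcases hbS with h0 | hpar
    · by_cases hpar2 : n % 2 = 0
      · exact ⟨n / 2 - 1, by unfold mm; omega, by omega⟩
      · exact ⟨(n - 1) / 2, by unfold mm; omega, by omega⟩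
    · exact ⟨(n - b) / 2 - 1, by unfold mm; omega, by omega⟩
  have := congrFun hPhi ⟨tv, htv⟩
  simp only [Phi, LinearMap.coe_mk, AddHom.coe_mk, Pi.zero_apply] at this
  rwa [htb] at this

lemma ker_finrank_le :
    Module.finrank ℝ (LinearMap.ker (Lmap n)) ≤ Module.finrank ℝ (Fin (mm n) → ℂ) := by
  apply LinearMap.finrank_le_finrank_of_injective
    (f := (Phi n).comp (LinearMap.ker (Lmap n)).subtype)
  rw [← LinearMap.ker_eq_bot, LinearMap.ker_eq_bot']
  intro C hC0
  have h1 : Phi n C.1 = 0 := hC0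
  have := Phi_ker C.1 C.2 h1
  exact Subtype.ext this

def posr (n : ℕ) (t : Fin (mm n)) : Fin n :=
  ⟨n - 1 - 2 * (t : ℕ), by have := t.2; unfold mm at this; omega⟩

def posc (n : ℕ) (t : Fin (mm n)) : Fin n :=
  ⟨0, by have := t.2; unfold mm at this; omega⟩

/-- embedding of `Fin (mm n) → ℂ` onto the special positions -/
noncomputable def iota (n : ℕ) :
    (Fin (mm n) → ℂ) →ₗ[ℝ] Matrix (Fin n) (Fin n) ℂ where
  toFun v := ∑ t : Fin (mm n), v t • Matrix.single (posr n t) (posc n t) (1 : ℂ)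
  map_add' v₁ v₂ := by
    simp only [Pi.add_apply, add_smul, Finset.sum_add_distrib]
  map_smul' r v := by
    simp only [Pi.smul_apply, RingHom.id_apply, Finset.smul_sum, smul_assoc]

lemma iota_apply (v : Fin (mm n) → ℂ) (p q : Fin n) :
    iota n v p q
      = ∑ t : Fin (mm n), v t • Matrix.single (posr n t) (posc n t) (1 : ℂ) p q := by
  simp only [iota, LinearMap.coe_mk, AddHom.coe_mk]
  rw [Matrix.sum_apply]
  simp only [Matrix.smul_apply]

lemma std_apply (t : Fin (mm n)) (p q : Fin n) :
    Matrix.single (posr n t) (posc n t) (1 : ℂ) p q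
      = if posr n t = p ∧ posc n t = q then 1 else 0 := rfl

lemma iota_mem (v : Fin (mm n) → ℂ) : iota n v ∈ Vsub n := by
  intro p q hpq
  rw [iota_apply]
  apply Finset.sum_eq_zero
  intro t _
  have hmm : (t : ℕ) < (n + 1) / 2 := t.2
  rw [std_apply, if_neg, smul_zero]
  intro h
  apply hpq
  constructor
  · rw [← h.2]; rfl
  · refine ⟨(t : ℕ), ?_⟩
    rw [← h.1]
    show n - 1 - 2 * (t : ℕ) + 2 * (t : ℕ) + 1 = n
    omega

lemma iota_inj : Function.Injective (iota n) := by
  intro v₁ v₂ h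
  funext t
  have h1 := congrFun (congrFun h (posr n t)) (posc n t)
  rw [iota_apply, iota_apply] at h1
  have key : ∀ v : Fin (mm n) → ℂ,
      (∑ s : Fin (mm n),
        v s • Matrix.single (posr n s) (posc n s) (1 : ℂ) (posr n t) (posc n t))
      = v t := by
    intro v
    rw [Finset.sum_eq_single t]
    · rw [std_apply, if_pos ⟨rfl, rfl⟩, smul_eq_mul, mul_one]
    · intro s _ hst
      rw [std_apply, if_neg, smul_zero]
      intro hc
      apply hst
      have h2 := hc.1
      have hmms : (s : ℕ) < (n + 1) / 2 := s.2
      have hmmt : (t : ℕ) < (n + 1) / 2 := t.2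
      have h3 : n - 1 - 2 * (s : ℕ) = n - 1 - 2 * (t : ℕ) := congrArg Fin.val h2
      exact Fin.ext (by omega)
    · intro ht'; exact absurd (Finset.mem_univ t) ht'
  rw [key v₁, key v₂] at h1
  exact h1

lemma V_finrank_ge :
    Module.finrank ℝ (Fin (mm n) → ℂ) ≤ Module.finrank ℝ (Vsub n) := by
  apply LinearMap.finrank_le_finrank_of_injective
    (f := (iota n).codRestrict (Vsub n) iota_mem)
  intro v₁ v₂ h
  exact iota_inj (congrArg Subtype.val h)

lemma range_inf_V : LinearMap.range (Lmap n) ⊓ Vsub n = ⊥ := by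
  rw [eq_bot_iff]
  intro x hx
  obtain ⟨⟨C, hC⟩, hxV⟩ := hx
  rw [Submodule.mem_bot]
  exact memV_eq_zero hC (fun p q hpq => by by_contra hne; exact hpq (hxV p q hne))

lemma sup_top : LinearMap.range (Lmap n) ⊔ Vsub n = ⊤ := by
  apply Submodule.eq_top_of_finrank_eq
  apply le_antisymm (Submodule.finrank_le _)
  have h1 := Submodule.finrank_sup_add_finrank_inf_eq (LinearMap.range (Lmap n)) (Vsub n)
  rw [range_inf_V] at h1
  have h2 := LinearMap.finrank_range_add_finrank_ker (Lmap n)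
  have h3 : Module.finrank ℝ (LinearMap.ker (Lmap n)) ≤ Module.finrank ℝ (Vsub n) :=
    le_trans ker_finrank_le V_finrank_ge
  simp only [finrank_bot, add_zero] at h1
  omega

end Stmt10

open Stmt10 in

/-- `ℂ^{n×n} = T(J_n(0)) ⊕_ℝ V`, where `V` consists of the matrices supported on
the first-column positions `(n,1), (n−2,1), (n−4,1), …` . -/
theorem stmt10 (n : ℕ) (A : Matrix (Fin n) (Fin n) ℂ) :
    ∃! D : Matrix (Fin n) (Fin n) ℂ,
      (∀ p q : Fin n, D p q ≠ 0 →
        (q : ℕ) = 0 ∧ ∃ t : ℕ, (p : ℕ) + 2 * t + 1 = n) ∧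
      A - D ∈ Tset (Jmat n 0) := by
  have hA : A ∈ LinearMap.range (Lmap n) ⊔ Vsub n := by
    rw [sup_top]; exact Submodule.mem_top
  obtain ⟨x, hx, y, hy, hxy⟩ := Submodule.mem_sup.mp hA
  have hAy : A - y = x := by rw [← hxy]; abel
  refine ⟨y, ⟨?_, ?_⟩, ?_⟩
  · intro p q hpq
    by_contra hc
    exact hpq (hy p q hc)
  · obtain ⟨C, hC⟩ := hx
    exact ⟨C, by rw [hAy, ← hC]; rfl⟩
  · rintro D' ⟨hD'pred, C', hC'⟩
    have hD'V : D' ∈ Vsub n := fun p q h =>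
      not_not.mp (fun hne => h (hD'pred p q hne))
    have hD'r : A - D' ∈ LinearMap.range (Lmap n) := ⟨C', hC'.symm⟩
    have hyr : A - y ∈ LinearMap.range (Lmap n) := by rw [hAy]; exact hx
    have hsub : y - D' ∈ LinearMap.range (Lmap n) ⊓ Vsub n := by
      constructor
      · have : y - D' = (A - D') - (A - y) := by abel
        rw [this]
        exact Submodule.sub_mem _ hD'r hyr
      · exact Submodule.sub_mem _ hy hD'V
    rw [range_inf_V] at hsub
    have := (Submodule.mem_bot ℝ).mp hsub
    have := sub_eq_zero.mp this
    exact this.symm
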